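/- Let f_n(x) = 2T_n(x/2 − 1) + 2 (Chebyshev type chain with a = 1/2, b = −1). Then for positive integers m < n, f_m(x) divides f_n(x) in ℚ[x] if and only if m ∣ n and n/m is odd. -/

import Mathlib

open Polynomial

lemma T_eval_neg_one_aux (k : ℕ) :
    (Polynomial.Chebyshev.T ℚ (k : ℤ)).eval (-1) = (-1) ^ k := by
  induction k using Nat.twoStepInduction with
  | zero => simp [Polynomial.Chebyshev.T_zero]
  | one => simp [Polynomial.Chebyshev.T_one]
  | more n ih1 ih2 =>
    have : ((n + 2 : ℕ) : ℤ) = (n : ℤ) + 2 := by push_cast; ring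
    rw [this, Polynomial.Chebyshev.T_add_two]
    have : ((n + 1 : ℕ) : ℤ) = (n : ℤ) + 1 := by push_cast; ring
    rw [← this]
    simp only [eval_sub, eval_mul, eval_ofNat, eval_X, ih1, ih2]
    ring

theorem chebyshev_chain_neg_one_dvd_iff (f : ℕ → ℚ[X])
    (hf : ∀ j : ℕ, f j =
      C 2 * (Polynomial.Chebyshev.T ℚ (j : ℤ)).comp (C (1/2) * X - C 1) + C 2)
    (m n : ℕ) (hm : 0 < m) (hmn : m < n) :
    f m ∣ f n ↔ m ∣ n ∧ Odd (n / m) := by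
  set u : ℚ[X] := C (1/2) * X - C 1 with hu
  constructor
  · -- hard direction
    intro hdvd
    -- map to ℝ and evaluate at x₀ = 2 cos (π/m) + 2
    set θ : ℝ := Real.pi / m with hθ
    set x₀ : ℝ := 2 * Real.cos θ + 2 with hx₀
    have hev : ∀ j : ℕ, ((f j).map (algebraMap ℚ ℝ)).eval x₀
        = 2 * Real.cos (j * θ) + 2 := by
      intro j
      rw [hf j]
      rw [Polynomial.map_add, Polynomial.map_mul, Polynomial.map_comp,
        Polynomial.Chebyshev.map_T]
      have hcos : (Polynomial.map (algebraMap ℚ ℝ) u).eval x₀ = Real.cos θ := by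
        rw [hu]
        simp [Polynomial.map_sub, Polynomial.map_mul, hx₀]
        ring
      simp only [eval_add, eval_mul, map_C, eval_C, eval_comp, hcos,
        Polynomial.Chebyshev.T_real_cos, map_ofNat]
      push_cast
      norm_num
    have hm0 : ((f m).map (algebraMap ℚ ℝ)).eval x₀ = 0 := by
      rw [hev m]
      have : (m : ℝ) * θ = Real.pi := by
        rw [hθ]
        field_simp
      rw [this, Real.cos_pi]; ring
    have hn0 : ((f n).map (algebraMap ℚ ℝ)).eval x₀ = 0 := by
      obtain ⟨q, hq⟩ := hdvd
      rw [hq, Polynomial.map_mul, eval_mul, hm0, zero_mul]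
    rw [hev n] at hn0
    have hcosn : Real.cos (n * θ) = -1 := by linarith
    obtain ⟨k, hk⟩ := Real.cos_eq_neg_one_iff.mp hcosn
    have hmR : (m : ℝ) ≠ 0 := by positivity
    have hnm : (Real.pi) * ((m : ℝ) * (2 * k + 1)) = Real.pi * n := by
      rw [hθ] at hk
      field_simp at hk
      linear_combination Real.pi * hk
    have hnm2 : (m : ℝ) * (2 * (k : ℝ) + 1) = (n : ℝ) :=
      mul_left_cancel₀ Real.pi_ne_zero hnm
    have hzz : ((m : ℤ) * (2 * k + 1) : ℤ) = (n : ℤ) := by exact_mod_cast hnm2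
    have hmZ : (0:ℤ) < m := by exact_mod_cast hm
    have hnZ : (0:ℤ) < n := by exact_mod_cast (hm.trans hmn)
    have h2k : (0:ℤ) < 2 * k + 1 := by nlinarith
    have hj : (k.toNat : ℤ) = k := Int.toNat_of_nonneg (by omega)
    have hnn : n = m * (2 * k.toNat + 1) := by
      have : (n : ℤ) = (m : ℤ) * (2 * (k.toNat : ℤ) + 1) := by rw [hj]; linarith [hzz]
      exact_mod_cast this
    refine ⟨⟨2 * k.toNat + 1, hnn⟩, ?_⟩
    rw [hnn, Nat.mul_div_cancel_left _ hm]
    exact ⟨k.toNat, by ring⟩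
  · rintro ⟨hdvd, hodd⟩
    set k : ℕ := n / m with hk
    have hn : n = m * k := by rw [hk, Nat.mul_div_cancel' hdvd]
    -- X + 1 divides T k + 1
    have hroot : (Polynomial.Chebyshev.T ℚ (k : ℤ) + 1).IsRoot (-1) := by
      simp [Polynomial.IsRoot, T_eval_neg_one_aux, hodd.neg_one_pow]
    obtain ⟨Q, hQ⟩ := (dvd_iff_isRoot.mpr hroot)
    set s : ℚ[X] := (Polynomial.Chebyshev.T ℚ (m : ℤ)).comp u with hs
    refine ⟨Q.comp s, ?_⟩
    have hTn : Polynomial.Chebyshev.T ℚ (n : ℤ)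
        = (Polynomial.Chebyshev.T ℚ (k : ℤ)).comp (Polynomial.Chebyshev.T ℚ (m : ℤ)) := by
      rw [hn]
      push_cast
      rw [mul_comm, Polynomial.Chebyshev.T_mul]
    have h1 : (Polynomial.Chebyshev.T ℚ (k : ℤ)).comp s + 1 = (s + 1) * Q.comp s := by
      have := congrArg (fun p => p.comp s) hQ
      simpa [add_comp, mul_comp, sub_comp, X_comp, C_comp, one_comp] using this
    rw [hf n, hf m, hTn, comp_assoc]
    linear_combination (C (2:ℚ)) * h1
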